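/- Let a_1 > 0, a_2 ≥ 0, and define D_{n,k} by D_{n,k} = (a_1 k + a_2)D_{n-1,k} + (b_1 n - b_1 k + b_2)D_{n-1,k-1} with D_{0,0}=1 and D_{n,k}=0 unless 0 ≤ k ≤ n, where b_1 > 0, b_2 ≥ 0. Let F_{n,k} satisfy F_{n,k} = (a_1 k + a_2)F_{n-1,k} + (b_1 k + b_2 - b_1 + (a_2/a_1)b_1)F_{n-1,k-1} with F_{0,0}=1. Then for all n, k ≥ 0, D_{n,k} = Σ_{i≥0} F_{n,i}·C(n-i, k-i)·(-b_1/a_1)^(k-i). -/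

import Mathlib

lemma key_term (a₁ a₂ b₁ b₂ : ℝ) (ha₁ : a₁ ≠ 0) (Fv : ℝ) (n m j : ℕ)
    (hj : j ≤ m) (hjn : j ≤ n) :
    (a₁ * j + a₂) * Fv * ((n + 1 - j).choose (m + 1 - j) : ℝ) * (-(b₁ / a₁)) ^ (m + 1 - j)
      + (b₁ * ((j : ℝ) + 1) + b₂ - b₁ + (a₂ / a₁) * b₁) * Fv * ((n - j).choose (m - j) : ℝ) * (-(b₁ / a₁)) ^ (m - j)
    = (a₁ * ((m : ℝ) + 1) + a₂) * (Fv * ((n - j).choose (m + 1 - j) : ℝ) * (-(b₁ / a₁)) ^ (m + 1 - j))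
      + (b₁ * ((n : ℝ) + 1) - b₁ * ((m : ℝ) + 1) + b₂) * (Fv * ((n - j).choose (m - j) : ℝ) * (-(b₁ / a₁)) ^ (m - j)) := by
  have e1 : n + 1 - j = (n - j) + 1 := by omega
  have e2 : m + 1 - j = (m - j) + 1 := by omega
  have hPQ : ((m : ℝ) - j + 1) * ((n - j).choose ((m - j) + 1) : ℝ)
      = ((n : ℝ) - m) * ((n - j).choose (m - j) : ℝ) := by
    rcases le_or_gt m n with h | h
    · have h0 := Nat.choose_succ_right_eq (n - j) (m - j)
      have h1 : (n - j) - (m - j) = n - m := by omega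
      rw [h1] at h0
      have h2 := congrArg (fun t : ℕ => (t : ℝ)) h0
      simp only [Nat.cast_mul, Nat.cast_add, Nat.cast_one, Nat.cast_sub h, Nat.cast_sub hj] at h2
      linear_combination h2
    · have z1 : (n - j).choose ((m - j) + 1) = 0 := Nat.choose_eq_zero_of_lt (by omega)
      have z2 : (n - j).choose (m - j) = 0 := Nat.choose_eq_zero_of_lt (by omega)
      rw [z1, z2]; simp
  have hac : a₁ * (-(b₁ / a₁)) = -b₁ := by field_simp
  rw [e1, e2, Nat.choose_succ_succ, pow_succ]
  push_cast
  linear_combination (-( (-(b₁/a₁))^(m-j) * Fv * a₁ * (-(b₁/a₁)) )) * hPQ +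
    ((-(b₁/a₁))^(m-j) * Fv * ((n-j).choose (m-j) : ℝ) * ((j:ℝ)+(m:ℝ)-(n:ℝ))) * hac

theorem generalized_frobenius_formula
    (a₁ a₂ b₁ b₂ : ℝ) (ha₁ : 0 < a₁) (ha₂ : 0 ≤ a₂) (hb₁ : 0 < b₁) (hb₂ : 0 ≤ b₂)
    (D F : ℕ → ℤ → ℝ)
    (hD0 : D 0 0 = 1)
    (hDb : ∀ (n : ℕ) (k : ℤ), (k < 0 ∨ (n : ℤ) < k) → D n k = 0)
    (hDrec : ∀ (n : ℕ) (k : ℤ),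
      D (n + 1) k =
        (a₁ * (k : ℝ) + a₂) * D n k +
        (b₁ * ((n : ℝ) + 1) - b₁ * (k : ℝ) + b₂) * D n (k - 1))
    (hF0 : F 0 0 = 1)
    (hFb : ∀ (n : ℕ) (k : ℤ), (k < 0 ∨ (n : ℤ) < k) → F n k = 0)
    (hFrec : ∀ (n : ℕ) (k : ℤ),
      F (n + 1) k =
        (a₁ * (k : ℝ) + a₂) * F n k +
        (b₁ * (k : ℝ) + b₂ - b₁ + (a₂ / a₁) * b₁) * F n (k - 1)) :
    ∀ n k : ℕ, D n (k : ℤ) =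
      ∑ i ∈ Finset.range (k + 1),
        F n (i : ℤ) * ((n - i).choose (k - i) : ℝ) * (-(b₁ / a₁)) ^ (k - i) := by
  intro n
  induction n with
  | zero =>
    intro k
    cases k with
    | zero => simp [hD0, hF0]
    | succ m =>
      rw [hDb 0 ((m+1 : ℕ) : ℤ) (Or.inr (by exact_mod_cast Nat.succ_pos m))]
      symm
      apply Finset.sum_eq_zero
      intro i hi
      rcases Nat.eq_zero_or_pos i with h | h
      · subst h
        simp [Nat.choose_eq_zero_of_lt (Nat.succ_pos m)]
      · rw [hFb 0 (i : ℤ) (Or.inr (by exact_mod_cast h))]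
        ring
  | succ n IH =>
    intro k
    cases k with
    | zero =>
      have h0 : ((0 : ℕ) : ℤ) = 0 := by norm_num
      have IH0 := IH 0
      rw [h0] at IH0
      rw [h0, hDrec n 0, hDb n (0 - 1) (Or.inl (by norm_num)), IH0]
      norm_num [Finset.sum_range_one]
      rw [hFrec n 0, hFb n (0 - 1) (Or.inl (by norm_num))]
      norm_num
    | succ m =>
      have hcast : ((m + 1 : ℕ) : ℤ) = (m : ℤ) + 1 := by push_cast; ring
      rw [hcast, hDrec n ((m : ℤ) + 1), show (m : ℤ) + 1 - 1 = (m : ℤ) by ring, IH m]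
      have IH1 := IH (m + 1)
      rw [hcast] at IH1
      rw [IH1]
      -- now a pure sum identity
      have hsplit : ∀ i ∈ Finset.range (m + 2),
          F (n + 1) (i : ℤ) * (((n + 1 - i).choose (m + 1 - i) : ℝ)) * (-(b₁ / a₁)) ^ (m + 1 - i)
          = (a₁ * i + a₂) * F n (i : ℤ) * ((n + 1 - i).choose (m + 1 - i) : ℝ) * (-(b₁ / a₁)) ^ (m + 1 - i)
            + (b₁ * i + b₂ - b₁ + (a₂ / a₁) * b₁) * F n ((i : ℤ) - 1) * ((n + 1 - i).choose (m + 1 - i) : ℝ) * (-(b₁ / a₁)) ^ (m + 1 - i) := by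
        intro i _
        rw [hFrec n (i : ℤ)]
        push_cast
        ring
      rw [Finset.sum_congr rfl hsplit, Finset.sum_add_distrib]
      rw [Finset.sum_range_succ' (fun i => (b₁ * i + b₂ - b₁ + (a₂ / a₁) * b₁) * F n ((i : ℤ) - 1) * ((n + 1 - i).choose (m + 1 - i) : ℝ) * (-(b₁ / a₁)) ^ (m + 1 - i))]
      rw [Finset.sum_range_succ (fun i => (a₁ * i + a₂) * F n (i : ℤ) * ((n + 1 - i).choose (m + 1 - i) : ℝ) * (-(b₁ / a₁)) ^ (m + 1 - i))]
      rw [Finset.sum_range_succ (fun i => F n (i : ℤ) * ((n - i).choose (m + 1 - i) : ℝ) * (-(b₁ / a₁)) ^ (m + 1 - i))]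
      rw [hFb n (((0:ℕ) : ℤ) - 1) (Or.inl (by norm_num))]
      have hne : a₁ ≠ 0 := ne_of_gt ha₁
      have hkey : ∀ j ∈ Finset.range (m + 1),
          (a₁ * j + a₂) * F n (j : ℤ) * ((n + 1 - j).choose (m + 1 - j) : ℝ) * (-(b₁ / a₁)) ^ (m + 1 - j)
            + (b₁ * ((j : ℝ) + 1) + b₂ - b₁ + (a₂ / a₁) * b₁) * F n (j : ℤ) * ((n - j).choose (m - j) : ℝ) * (-(b₁ / a₁)) ^ (m - j)
          = (a₁ * ((m : ℝ) + 1) + a₂) * (F n (j : ℤ) * ((n - j).choose (m + 1 - j) : ℝ) * (-(b₁ / a₁)) ^ (m + 1 - j))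
            + (b₁ * ((n : ℝ) + 1) - b₁ * ((m : ℝ) + 1) + b₂) * (F n (j : ℤ) * ((n - j).choose (m - j) : ℝ) * (-(b₁ / a₁)) ^ (m - j)) := by
        intro j hj
        rcases le_or_gt j n with hn | hn
        · exact key_term a₁ a₂ b₁ b₂ hne (F n (j : ℤ)) n m j
            (Nat.lt_succ_iff.mp (Finset.mem_range.mp hj)) hn
        · rw [hFb n (j : ℤ) (Or.inr (by exact_mod_cast hn))]
          ring
      have hsum :
          (∑ j ∈ Finset.range (m + 1),
            ((a₁ * j + a₂) * F n (j : ℤ) * ((n + 1 - j).choose (m + 1 - j) : ℝ) * (-(b₁ / a₁)) ^ (m + 1 - j)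
              + (b₁ * ((j : ℝ) + 1) + b₂ - b₁ + (a₂ / a₁) * b₁) * F n (j : ℤ) * ((n - j).choose (m - j) : ℝ) * (-(b₁ / a₁)) ^ (m - j)))
          = (a₁ * ((m : ℝ) + 1) + a₂) * (∑ j ∈ Finset.range (m + 1), F n (j : ℤ) * ((n - j).choose (m + 1 - j) : ℝ) * (-(b₁ / a₁)) ^ (m + 1 - j))
            + (b₁ * ((n : ℝ) + 1) - b₁ * ((m : ℝ) + 1) + b₂) * (∑ j ∈ Finset.range (m + 1), F n (j : ℤ) * ((n - j).choose (m - j) : ℝ) * (-(b₁ / a₁)) ^ (m - j)) := by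
        rw [Finset.mul_sum, Finset.mul_sum, ← Finset.sum_add_distrib]
        exact Finset.sum_congr rfl hkey
      rw [Finset.sum_add_distrib] at hsum
      push_cast
      simp only [Nat.succ_sub_succ, Nat.add_sub_cancel, Nat.sub_self, Nat.choose_zero_right,
        pow_zero, Nat.cast_one, mul_one, mul_zero, zero_mul, add_zero, add_sub_cancel_right]
      push_cast at hsum
      linear_combination -hsum
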